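/- arXiv:2309.11030 — 2 statements merged into one kernel-verified Lean document; each statement's English description precedes it below -/
import Mathlib

section
/- For the 2-dimensional non-Abelian subalgebra a₍₁₄₎ = span{x₁,x₄} of 𝔠(2) (with {x₁,x₄} = x₁), the three polynomials φ₁ = x₁x₅ − x₄², φ₂ = x₂x₆ + x₃², φ₃ = x₁x₆ − 2x₃x₄ − x₂x₅ all lie in the Poisson commutant of a₍₁₄₎ and pairwise Poisson-commute: {φᵢ, x₁} = {φᵢ, x₄} = 0 for i = 1,2,3, and {φᵢ, φⱼ} = 0 for all 1 ≤ i, j ≤ 3. -/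
open MvPolynomial

/-- Structure-constant polynomials `c j k = {x_{j+1}, x_{k+1}}` of the 2D conformal
algebra `𝔠(2)` (indices `0,…,5` correspond to `x₁,…,x₆`). -/
noncomputable def c2Mat : Matrix (Fin 6) (Fin 6) (MvPolynomial (Fin 6) ℝ) :=
  !![0,            0,            -X 1, X 0,  2 * X 3,      2 * X 2;
     0,            0,            X 0,  X 1,  -(2 * X 2),   2 * X 3;
     X 1,          -X 0,         0,    0,    X 5,          -X 4;
     -X 0,         -X 1,         0,    0,    X 4,          X 5;
     -(2 * X 3),   2 * X 2,      -X 5, -X 4, 0,            0;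
     -(2 * X 2),   -(2 * X 3),   X 4,  -X 5, 0,            0]

/-- The Lie–Poisson bracket of `𝔠(2)` on `ℝ[x₁,…,x₆]`:
`{p,q} = ∑_{j,k} c_{jk} (∂p/∂x_j) (∂q/∂x_k)`. -/
noncomputable def pb (p q : MvPolynomial (Fin 6) ℝ) : MvPolynomial (Fin 6) ℝ :=
  ∑ j : Fin 6, ∑ k : Fin 6, c2Mat j k * pderiv j p * pderiv k q

/-- The three quadratic invariants of the non-Abelian subalgebra
`a₍₁₄₎ = span{x₁,x₄}`. -/
noncomputable def phi14 : Fin 3 → MvPolynomial (Fin 6) ℝ :=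
  ![X 0 * X 4 - X 3 ^ 2,
    X 1 * X 5 + X 2 ^ 2,
    X 0 * X 5 - 2 * X 2 * X 3 - X 1 * X 4]

set_option maxHeartbeats 2000000 in
@[simp] lemma cons_val_five' {α : Type*} (x : α) (u : Fin 5 → α) :
    Matrix.vecCons x u 5 = u 4 := rfl

@[simp] lemma vecHead_const'' {α : Type*} {n : ℕ} (a : α) :
    Matrix.vecHead (fun _ : Fin (n+1) => a) = a := rfl

@[simp] lemma vecTail_const'' {α : Type*} {n : ℕ} (a : α) :
    Matrix.vecTail (fun _ : Fin (n+1) => a) = fun _ : Fin n => a := rfl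

@[simp] lemma pderiv_two' (j : Fin 6) :
    pderiv j (2 : MvPolynomial (Fin 6) ℝ) = 0 := by
  rw [show (2 : MvPolynomial (Fin 6) ℝ) = C 2 from (map_ofNat C 2).symm, pderiv_C]

set_option maxHeartbeats 4000000 in
/-- `φ₁, φ₂, φ₃` lie in the Poisson commutant of `a₍₁₄₎` and pairwise
Poisson-commute. -/
theorem stmt8 :
    (∀ i : Fin 3, pb (phi14 i) (X 0) = 0) ∧
    (∀ i : Fin 3, pb (phi14 i) (X 3) = 0) ∧
    (∀ i j : Fin 3, pb (phi14 i) (phi14 j) = 0) := by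
  refine ⟨?_, ?_, ?_⟩
  · intro i; fin_cases i <;>
      (simp [pb, c2Mat, phi14, Fin.sum_univ_six, pderiv_X, Pi.single_apply]; try ring)
  · intro i; fin_cases i <;>
      (simp [pb, c2Mat, phi14, Fin.sum_univ_six, pderiv_X, Pi.single_apply]; try ring)
  · intro i j; fin_cases i <;> fin_cases j <;>
      (simp [pb, c2Mat, phi14, Fin.sum_univ_six, pderiv_X, Pi.single_apply]; try ring)
end

section
/- The cubic Poisson algebra from the Casimir of the su(2) subalgebra of 𝔠(2): let K = 4x₃² + (x₁ + x₅)² + (x₂ + x₆)² (four times the su(2) Casimir), and set A₁ = x₁ + x₅, A₂ = x₂ + x₆, A₃ = x₃, A₄ = x₁² + 2x₄² + x₅² − 2x₂x₆. Then {Aⱼ, K} = 0 for j = 1, 2, 3, 4, and the brackets among the generators are {A₁, A₂} = 4A₃, {A₁, A₃} = −A₂, {A₂, A₃} = A₁, {A₁, A₄} = −4A₂A₃, {A₂, A₄} = −4A₁A₃, {A₃, A₄} = 2A₁A₂. -/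
open MvPolynomial

/-- Generators of the cubic Poisson algebra from the Casimir of the `su(2)`
subalgebra of `𝔠(2)`: `A₁ = x₁ + x₅, A₂ = x₂ + x₆, A₃ = x₃,
A₄ = x₁² + 2x₄² + x₅² − 2x₂x₆`. -/
noncomputable def Asu : Fin 4 → MvPolynomial (Fin 6) ℝ :=
  ![X 0 + X 4,
    X 1 + X 5,
    X 2,
    X 0 ^ 2 + 2 * X 3 ^ 2 + X 4 ^ 2 - 2 * X 1 * X 5]

lemma cv00 : c2Mat 0 0 = 0 := rfl
lemma cv01 : c2Mat 0 1 = 0 := rfl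
lemma cv02 : c2Mat 0 2 = -X 1 := rfl
lemma cv03 : c2Mat 0 3 = X 0 := rfl
lemma cv04 : c2Mat 0 4 = 2 * X 3 := rfl
lemma cv05 : c2Mat 0 5 = 2 * X 2 := rfl
lemma cv10 : c2Mat 1 0 = 0 := rfl
lemma cv11 : c2Mat 1 1 = 0 := rfl
lemma cv12 : c2Mat 1 2 = X 0 := rfl
lemma cv13 : c2Mat 1 3 = X 1 := rfl
lemma cv14 : c2Mat 1 4 = -(2 * X 2) := rfl
lemma cv15 : c2Mat 1 5 = 2 * X 3 := rfl
lemma cv20 : c2Mat 2 0 = X 1 := rfl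
lemma cv21 : c2Mat 2 1 = -X 0 := rfl
lemma cv22 : c2Mat 2 2 = 0 := rfl
lemma cv23 : c2Mat 2 3 = 0 := rfl
lemma cv24 : c2Mat 2 4 = X 5 := rfl
lemma cv25 : c2Mat 2 5 = -X 4 := rfl
lemma cv30 : c2Mat 3 0 = -X 0 := rfl
lemma cv31 : c2Mat 3 1 = -X 1 := rfl
lemma cv32 : c2Mat 3 2 = 0 := rfl
lemma cv33 : c2Mat 3 3 = 0 := rfl
lemma cv34 : c2Mat 3 4 = X 4 := rfl
lemma cv35 : c2Mat 3 5 = X 5 := rfl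
lemma cv40 : c2Mat 4 0 = -(2 * X 3) := rfl
lemma cv41 : c2Mat 4 1 = 2 * X 2 := rfl
lemma cv42 : c2Mat 4 2 = -X 5 := rfl
lemma cv43 : c2Mat 4 3 = -X 4 := rfl
lemma cv44 : c2Mat 4 4 = 0 := rfl
lemma cv45 : c2Mat 4 5 = 0 := rfl
lemma cv50 : c2Mat 5 0 = -(2 * X 2) := rfl
lemma cv51 : c2Mat 5 1 = -(2 * X 3) := rfl
lemma cv52 : c2Mat 5 2 = X 4 := rfl
lemma cv53 : c2Mat 5 3 = -X 5 := rfl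
lemma cv54 : c2Mat 5 4 = 0 := rfl
lemma cv55 : c2Mat 5 5 = 0 := rfl
lemma as0 : Asu 0 = X 0 + X 4 := rfl
lemma as1 : Asu 1 = X 1 + X 5 := rfl
lemma as2 : Asu 2 = X 2 := rfl
lemma as3 : Asu 3 = X 0 ^ 2 + 2 * X 3 ^ 2 + X 4 ^ 2 - 2 * X 1 * X 5 := rfl

lemma pd4 (i : Fin 6) : pderiv i (4 : MvPolynomial (Fin 6) ℝ) = 0 := by
  rw [← map_ofNat (C : ℝ →+* MvPolynomial (Fin 6) ℝ) 4]; exact pderiv_C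
lemma pd2 (i : Fin 6) : pderiv i (2 : MvPolynomial (Fin 6) ℝ) = 0 := by
  rw [← map_ofNat (C : ℝ →+* MvPolynomial (Fin 6) ℝ) 2]; exact pderiv_C
lemma pb_expand (p q : MvPolynomial (Fin 6) ℝ) :
    pb p q = (-X 1) * pderiv 0 p * pderiv 2 q + (X 0) * pderiv 0 p * pderiv 3 q + (2 * X 3) * pderiv 0 p * pderiv 4 q + (2 * X 2) * pderiv 0 p * pderiv 5 q + (X 0) * pderiv 1 p * pderiv 2 q + (X 1) * pderiv 1 p * pderiv 3 q + (-(2 * X 2)) * pderiv 1 p * pderiv 4 q + (2 * X 3) * pderiv 1 p * pderiv 5 q + (X 1) * pderiv 2 p * pderiv 0 q + (-X 0) * pderiv 2 p * pderiv 1 q + (X 5) * pderiv 2 p * pderiv 4 q + (-X 4) * pderiv 2 p * pderiv 5 q + (-X 0) * pderiv 3 p * pderiv 0 q + (-X 1) * pderiv 3 p * pderiv 1 q + (X 4) * pderiv 3 p * pderiv 4 q + (X 5) * pderiv 3 p * pderiv 5 q + (-(2 * X 3)) * pderiv 4 p * pderiv 0 q + (2 * X 2) * pderiv 4 p * pderiv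 1 q + (-X 5) * pderiv 4 p * pderiv 2 q + (-X 4) * pderiv 4 p * pderiv 3 q + (-(2 * X 2)) * pderiv 5 p * pderiv 0 q + (-(2 * X 3)) * pderiv 5 p * pderiv 1 q + (X 4) * pderiv 5 p * pderiv 2 q + (-X 5) * pderiv 5 p * pderiv 3 q := by
  simp only [pb, Fin.sum_univ_six, cv00, cv01, cv02, cv03, cv04, cv05, cv10, cv11, cv12, cv13, cv14, cv15, cv20, cv21, cv22, cv23, cv24, cv25, cv30, cv31, cv32, cv33, cv34, cv35, cv40, cv41, cv42, cv43, cv44, cv45, cv50, cv51, cv52, cv53, cv54, cv55]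
  ring

set_option maxHeartbeats 1600000 in
/-- The cubic Poisson algebra from the `su(2)` Casimir
`K = 4x₃² + (x₁ + x₅)² + (x₂ + x₆)²`. -/
theorem stmt19 :
    (∀ j : Fin 4,
      pb (Asu j) (4 * X 2 ^ 2 + (X 0 + X 4) ^ 2 + (X 1 + X 5) ^ 2) = 0) ∧
    pb (Asu 0) (Asu 1) = 4 * Asu 2 ∧
    pb (Asu 0) (Asu 2) = -Asu 1 ∧
    pb (Asu 1) (Asu 2) = Asu 0 ∧
    pb (Asu 0) (Asu 3) = -4 * Asu 1 * Asu 2 ∧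
    pb (Asu 1) (Asu 3) = -4 * Asu 0 * Asu 2 ∧
    pb (Asu 2) (Asu 3) = 2 * Asu 0 * Asu 1 := by
  constructor
  · intro j
    have h0 : pb (Asu 0) (4 * X 2 ^ 2 + (X 0 + X 4) ^ 2 + (X 1 + X 5) ^ 2) = 0 := by
      rw [as0, pb_expand]
      simp (config := { decide := true }) [pderiv_mul, pderiv_X, Pi.single_apply, pd4, pd2]
      try ring
    have h1 : pb (Asu 1) (4 * X 2 ^ 2 + (X 0 + X 4) ^ 2 + (X 1 + X 5) ^ 2) = 0 := by
      rw [as1, pb_expand]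
      simp (config := { decide := true }) [pderiv_mul, pderiv_X, Pi.single_apply, pd4, pd2]
      try ring
    have h2 : pb (Asu 2) (4 * X 2 ^ 2 + (X 0 + X 4) ^ 2 + (X 1 + X 5) ^ 2) = 0 := by
      rw [as2, pb_expand]
      simp (config := { decide := true }) [pderiv_mul, pderiv_X, Pi.single_apply, pd4, pd2]
      try ring
    have h3 : pb (Asu 3) (4 * X 2 ^ 2 + (X 0 + X 4) ^ 2 + (X 1 + X 5) ^ 2) = 0 := by
      rw [as3, pb_expand]
      simp (config := { decide := true }) [pderiv_mul, pderiv_X, Pi.single_apply, pd4, pd2]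
      try ring
    fin_cases j
    · exact h0
    · exact h1
    · exact h2
    · exact h3
  refine ⟨?_, ?_, ?_, ?_, ?_, ?_⟩ <;>
  · simp only [as0, as1, as2, as3, pb_expand]
    simp (config := { decide := true }) [pderiv_mul, pderiv_X, Pi.single_apply, pd4, pd2]
    try ring
end
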